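/- Let R be a UFD with fraction field K, S ⊆ R, π an irreducible of R, and let {b_i}_{i≥0} ⊆ S be a π-sequence, i.e., for each k > 0 the polynomial (x−b₀)⋯(x−b_{k−1})/((b_k−b₀)⋯(b_k−b_{k−1})) lies in Int(S, R_{(π)}). If f ∈ K[x] has degree ≤ k, write f = Σ_{i=0}^{k} c_i · (x−b₀)⋯(x−b_{i−1})/((b_i−b₀)⋯(b_i−b_{i−1})) with c_i ∈ K. Then f ∈ Int(S, R_{(π)}) if and only if f(b_i) ∈ R_{(π)} for all 0 ≤ i ≤ k, which in turn holds iff all c_i ∈ R_{(π)}. -/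

import Mathlib

open Finset

/-- `x ∈ K` lies in the localization R_(π) of R at the prime ideal (π): it can be
written with a denominator not divisible by π. -/
def InLocAt {R K : Type} [CommRing R] [Field K] [Algebra R K] (π : R) (x : K) : Prop :=
  ∃ r s : R, ¬ π ∣ s ∧ x * algebraMap R K s = algebraMap R K r

section Aux

variable {R K : Type} [CommRing R] [Field K] [Algebra R K]

theorem loc_algebraMap {π : R} (h : ¬ IsUnit π) (r : R) :
    InLocAt π (algebraMap R K r) :=
  ⟨r, 1, fun hd => h (isUnit_of_dvd_one hd), by simp⟩

theorem loc_one {π : R} (h : ¬ IsUnit π) : InLocAt π (1 : K) := by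
  simpa using loc_algebraMap (K := K) h 1

theorem loc_zero {π : R} (h : ¬ IsUnit π) : InLocAt π (0 : K) := by
  simpa using loc_algebraMap (K := K) h 0

theorem loc_add {π : R} (hp : Prime π) {x y : K} (hx : InLocAt π x) (hy : InLocAt π y) :
    InLocAt π (x + y) := by
  obtain ⟨r₁, s₁, hs₁, he₁⟩ := hx
  obtain ⟨r₂, s₂, hs₂, he₂⟩ := hy
  refine ⟨r₁ * s₂ + r₂ * s₁, s₁ * s₂, ?_, ?_⟩
  · intro h
    rcases (hp.2.2 _ _ h) with h | h
    · exact hs₁ h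
    · exact hs₂ h
  · simp only [map_mul, map_add]
    linear_combination algebraMap R K s₂ * he₁ + algebraMap R K s₁ * he₂

theorem loc_mul {π : R} (hp : Prime π) {x y : K} (hx : InLocAt π x) (hy : InLocAt π y) :
    InLocAt π (x * y) := by
  obtain ⟨r₁, s₁, hs₁, he₁⟩ := hx
  obtain ⟨r₂, s₂, hs₂, he₂⟩ := hy
  refine ⟨r₁ * r₂, s₁ * s₂, ?_, ?_⟩
  · intro h
    rcases (hp.2.2 _ _ h) with h | h
    · exact hs₁ h
    · exact hs₂ h
  · simp only [map_mul]
    linear_combination (y * algebraMap R K s₂) * he₁ + algebraMap R K r₁ * he₂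

theorem loc_neg {π : R} {x : K} (hx : InLocAt π x) : InLocAt π (-x) := by
  obtain ⟨r, s, hs, he⟩ := hx
  exact ⟨-r, s, hs, by rw [map_neg, neg_mul, he]⟩

theorem loc_sub {π : R} (hp : Prime π) {x y : K} (hx : InLocAt π x) (hy : InLocAt π y) :
    InLocAt π (x - y) := by
  rw [sub_eq_add_neg]
  exact loc_add hp hx (loc_neg hy)

theorem loc_sum {π : R} (hp : Prime π) {ι : Type} (t : Finset ι) (g : ι → K)
    (hg : ∀ i ∈ t, InLocAt π (g i)) : InLocAt π (∑ i ∈ t, g i) := by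
  classical
  induction t using Finset.induction_on with
  | empty => simpa using loc_zero (K := K) hp.2.1
  | insert _ _ hnot ih =>
    rw [Finset.sum_insert hnot]
    exact loc_add hp (hg _ (Finset.mem_insert_self _ _))
      (ih fun i hi => hg i (Finset.mem_insert_of_mem hi))

end Aux

theorem stmt8 {R K : Type} [CommRing R] [IsDomain R] [UniqueFactorizationMonoid R]
    [Field K] [Algebra R K] [IsFractionRing R K]
    (S : Set R) (π : R) (hπ : Irreducible π)
    (b : ℕ → R) (hbS : ∀ i, b i ∈ S) (hbdist : ∀ i j, i ≠ j → b i ≠ b j)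
    (hπseq : ∀ k, 0 < k → ∀ s ∈ S,
      InLocAt π ((∏ i ∈ range k, (algebraMap R K s - algebraMap R K (b i))) /
        (∏ i ∈ range k, (algebraMap R K (b k) - algebraMap R K (b i)))))
    (k : ℕ) (f : Polynomial K) (hdeg : f.natDegree ≤ k) (c : ℕ → K)
    (hrep : f = ∑ j ∈ range (k + 1),
      Polynomial.C (c j) *
        (Polynomial.C ((∏ i ∈ range j, (algebraMap R K (b j) - algebraMap R K (b i)))⁻¹) *
          ∏ i ∈ range j, (Polynomial.X - Polynomial.C (algebraMap R K (b i))))) :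
    ((∀ s ∈ S, InLocAt π (f.eval (algebraMap R K s))) ↔
      (∀ i ≤ k, InLocAt π (f.eval (algebraMap R K (b i))))) ∧
    ((∀ i ≤ k, InLocAt π (f.eval (algebraMap R K (b i)))) ↔
      (∀ j ≤ k, InLocAt π (c j))) := by
  have hp : Prime π := hπ.prime
  set bK : ℕ → K := fun i => algebraMap R K (b i) with hbK
  set D : ℕ → K := fun j => ∏ i ∈ range j, (bK j - bK i) with hD
  -- injectivity of algebraMap
  have hinj : Function.Injective (algebraMap R K) := IsFractionRing.injective R K
  have hDne : ∀ j, D j ≠ 0 := by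
    intro j
    apply Finset.prod_ne_zero_iff.2
    intro i hi
    rw [sub_ne_zero]
    exact fun h => hbdist j i (Nat.ne_of_gt (Finset.mem_range.1 hi)) (hinj h)
  -- evaluation formula
  have heval : ∀ a : K, f.eval a =
      ∑ j ∈ range (k + 1), c j * ((D j)⁻¹ * ∏ i ∈ range j, (a - bK i)) := by
    intro a
    rw [hrep]
    simp [Polynomial.eval_finset_sum, Polynomial.eval_prod]
    rfl
  -- the basis polynomials take values in R_(π) on S
  have hbasis : ∀ j, ∀ s ∈ S, InLocAt π ((D j)⁻¹ * ∏ i ∈ range j, (algebraMap R K s - bK i)) := by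
    intro j s hs
    rcases Nat.eq_zero_or_pos j with rfl | hj
    · simpa [hD] using loc_one (K := K) hπ.not_isUnit
    · have := hπseq j hj s hs
      rw [div_eq_mul_inv, mul_comm] at this
      exact this
  -- direction: coefficients in R_(π) ⟹ values on S in R_(π)
  have hC2S : (∀ j ≤ k, InLocAt π (c j)) → ∀ s ∈ S, InLocAt π (f.eval (algebraMap R K s)) := by
    intro hc s hs
    rw [heval]
    refine loc_sum hp _ _ fun j hj => ?_
    exact loc_mul hp (hc j (Nat.lt_succ_iff.1 (Finset.mem_range.1 hj))) (hbasis j s hs)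
  -- evaluation at b i, i ≤ k
  have hevalb : ∀ i ≤ k, f.eval (bK i) =
      (∑ j ∈ range i, c j * ((D j)⁻¹ * ∏ l ∈ range j, (bK i - bK l))) + c i := by
    intro i hik
    rw [heval]
    rw [← Finset.sum_range_add_sum_Ico _ (by omega : i + 1 ≤ k + 1)]
    have hIco : ∑ j ∈ Finset.Ico (i + 1) (k + 1),
        c j * ((D j)⁻¹ * ∏ l ∈ range j, (bK i - bK l)) = 0 := by
      refine Finset.sum_eq_zero fun j hj => ?_
      have hij : i < j := (Finset.mem_Ico.1 hj).1
      have : (∏ l ∈ range j, (bK i - bK l)) = 0 :=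
        Finset.prod_eq_zero (Finset.mem_range.2 hij) (sub_self _)
      rw [this, mul_zero, mul_zero]
    rw [hIco, add_zero, Finset.sum_range_succ]
    congr 1
    rw [inv_mul_cancel₀ (hDne i), mul_one]
  -- direction: values at the b i in R_(π) ⟹ coefficients in R_(π)
  have hB2C : (∀ i ≤ k, InLocAt π (f.eval (bK i))) → ∀ j ≤ k, InLocAt π (c j) := by
    intro hb j
    induction j using Nat.strong_induction_on with
    | _ j ih =>
      intro hjk
      have h1 : c j = f.eval (bK j) -
          ∑ l ∈ range j, c l * ((D l)⁻¹ * ∏ m ∈ range l, (bK j - bK m)) := by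
        rw [hevalb j hjk]; ring
      rw [h1]
      refine loc_sub hp (hb j hjk) (loc_sum hp _ _ fun l hl => ?_)
      have hlj : l < j := Finset.mem_range.1 hl
      exact loc_mul hp (ih l hlj (le_trans hlj.le hjk)) (hbasis l (b j) (hbS j))
  constructor
  · constructor
    · intro h i hik
      exact h (b i) (hbS i)
    · intro h s hs
      exact hC2S (hB2C h) s hs
  · constructor
    · exact hB2C
    · intro hc i hik
      exact hC2S hc (b i) (hbS i)
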